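/- For real c∈(0,1) and positive reals ν, the function g(s) = [(1-c)^{ν/s}·(2-(1-c)^{ν/s})]^s is monotonically increasing in s>0. -/

import Mathlib

open Real Set

/-- `(1 - exp(-t))/t` is antitone on `(0, ∞)`. -/
lemma phi_anti : AntitoneOn (fun t : ℝ => (1 - Real.exp (-t)) / t) (Set.Ioi 0) := by
  have hderiv : ∀ x : ℝ, 0 < x →
      HasDerivAt (fun t : ℝ => (1 - Real.exp (-t)) / t)
        ((Real.exp (-x) * x - (1 - Real.exp (-x)) * 1) / x ^ 2) x := by
    intro x hx
    have h1 : HasDerivAt (fun t : ℝ => Real.exp (-t)) (Real.exp (-x) * (-1)) x :=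
      (Real.hasDerivAt_exp (-x)).comp x (hasDerivAt_neg x)
    have h2 : HasDerivAt (fun t : ℝ => 1 - Real.exp (-t)) (Real.exp (-x)) x := by
      simpa using h1.const_sub 1
    exact h2.div (hasDerivAt_id x) hx.ne'
  apply antitoneOn_of_deriv_nonpos (convex_Ioi 0)
  · exact ContinuousOn.div
      (by fun_prop) continuousOn_id (fun x hx => ne_of_gt (by exact hx))
  · intro x hx
    rw [interior_Ioi] at hx
    have := (hderiv x hx).differentiableAt
    exact this.differentiableWithinAt
  · intro x hx
    rw [interior_Ioi] at hx
    rw [(hderiv x hx).deriv]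
    have h3 : Real.exp (-x) * Real.exp x = 1 := by
      rw [← Real.exp_add]; simp
    have h4 : x + 1 ≤ Real.exp x := Real.add_one_le_exp x
    have h5 : 0 < Real.exp (-x) := Real.exp_pos _
    have hnum : Real.exp (-x) * x - (1 - Real.exp (-x)) * 1 ≤ 0 := by nlinarith
    exact div_nonpos_of_nonpos_of_nonneg hnum (sq_nonneg x)

lemma keyA {t v : ℝ} (ht : 0 < t) (htv : t ≤ v) :
    t * (1 - Real.exp (-v)) ≤ v * (1 - Real.exp (-t)) := by
  have hv : 0 < v := lt_of_lt_of_le ht htv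
  have := phi_anti (Set.mem_Ioi.mpr ht) (Set.mem_Ioi.mpr hv) htv
  rw [div_le_div_iff₀ hv ht] at this
  linarith

theorem g_increasing_in_s (c ν : ℝ) (hc0 : 0 < c) (hc1 : c < 1) (hν : 0 < ν) :
    ∀ s₁ s₂ : ℝ, 0 < s₁ → s₁ ≤ s₂ →
      ((1 - c) ^ (ν / s₁) * (2 - (1 - c) ^ (ν / s₁))) ^ s₁
        ≤ ((1 - c) ^ (ν / s₂) * (2 - (1 - c) ^ (ν / s₂))) ^ s₂ := by
  intro s₁ s₂ hs₁ hle
  have hs₂ : (0:ℝ) < s₂ := lt_of_lt_of_le hs₁ hle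
  set b : ℝ := 1 - c with hb
  have hb0 : 0 < b := by linarith
  have hb1 : b < 1 := by linarith
  have hlb : Real.log b < 0 := Real.log_neg hb0 hb1
  set a : ℝ := -(ν * Real.log b) with ha_def
  have ha : 0 < a := by
    have : ν * Real.log b < 0 := mul_neg_of_pos_of_neg hν hlb
    linarith
  have hrw : ∀ s : ℝ, 0 < s → b ^ (ν / s) = Real.exp (-(a / s)) := by
    intro s hs
    rw [Real.rpow_def_of_pos hb0]
    ring_nf
    rw [ha_def]; congr 1; ring
  have hp : ∀ s : ℝ, 0 < s → 0 < Real.exp (-(a / s)) ∧ Real.exp (-(a / s)) < 1 := by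
    intro s hs
    refine ⟨Real.exp_pos _, Real.exp_lt_one_iff.mpr ?_⟩
    have : 0 < a / s := div_pos ha hs
    linarith
  obtain ⟨hp1pos, hp1lt⟩ := hp s₁ hs₁
  obtain ⟨hp2pos, hp2lt⟩ := hp s₂ hs₂
  set p₁ : ℝ := Real.exp (-(a / s₁))
  set p₂ : ℝ := Real.exp (-(a / s₂))
  rw [hrw s₁ hs₁, hrw s₂ hs₂]
  have hexp_rpow : ∀ s : ℝ, 0 < s → (Real.exp (-(a / s))) ^ s = Real.exp (-a) := by
    intro s hs
    rw [← Real.exp_mul]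
    congr 1
    field_simp
  have hmul : ∀ s : ℝ, 0 < s → ∀ q : ℝ, 0 < q → q < 1 →
      (q * (2 - q)) ^ s = q ^ s * (2 - q) ^ s := by
    intro s hs q hq0 hq1
    exact Real.mul_rpow hq0.le (by linarith)
  rw [hmul s₁ hs₁ p₁ hp1pos hp1lt, hmul s₂ hs₂ p₂ hp2pos hp2lt,
    hexp_rpow s₁ hs₁, hexp_rpow s₂ hs₂]
  apply mul_le_mul_of_nonneg_left _ (Real.exp_pos _).le
  -- goal: (2 - p₁) ^ s₁ ≤ (2 - p₂) ^ s₂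
  set r : ℝ := s₁ / s₂ with hr_def
  have hr0 : 0 < r := div_pos hs₁ hs₂
  have hr1 : r ≤ 1 := (div_le_one hs₂).mpr hle
  have h2p₁ : (0:ℝ) ≤ 2 - p₁ := by linarith
  have hs₁eq : s₁ = r * s₂ := by rw [hr_def, div_mul_cancel₀ _ hs₂.ne']
  rw [hs₁eq, Real.rpow_mul h2p₁]
  apply Real.rpow_le_rpow (Real.rpow_nonneg h2p₁ r) _ hs₂.le
  -- goal : (2 - p₁) ^ r ≤ 2 - p₂
  have hbern : (2 - p₁) ^ r ≤ 1 + r * (1 - p₁) := by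
    have h := rpow_one_add_le_one_add_mul_self
      (s := 1 - p₁) (by linarith) hr0.le hr1
    have : (1 : ℝ) + (1 - p₁) = 2 - p₁ := by ring
    rwa [this] at h
  have hkey : r * (1 - p₁) ≤ 1 - p₂ := by
    have ht : 0 < a / s₂ := div_pos ha hs₂
    have htv : a / s₂ ≤ a / s₁ := div_le_div_of_nonneg_left ha.le hs₁ hle
    have h := keyA ht htv
    -- h : (a/s₂) * (1 - exp(-(a/s₁))) ≤ (a/s₁) * (1 - exp(-(a/s₂)))
    have hexp₁ : Real.exp (-(a / s₁)) = p₁ := rfl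
    have hexp₂ : Real.exp (-(a / s₂)) = p₂ := rfl
    rw [hexp₁, hexp₂] at h
    have hs₁ne : s₁ ≠ 0 := hs₁.ne'
    have hs₂ne : s₂ ≠ 0 := hs₂.ne'
    rw [div_mul_eq_mul_div, div_mul_eq_mul_div, div_le_div_iff₀ hs₂ hs₁] at h
    have hr : r * (1 - p₁) = s₁ * (1 - p₁) / s₂ := by
      rw [hr_def]; ring
    rw [hr, div_le_iff₀ hs₂]
    nlinarith
  linarith
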